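/- Suppose 0 ≤ L ≤ L̃ and 0 < R ≤ R̃. Let β = 1/(1 + √(2R̃/L̃)) (i.e., β = g(L̃/R̃) with g(z)=1/(1+√(2/z))). Then (-L·ln β + R)/(1 - β) ≤ L + √(2 L̃ R̃) + R. -/

import Mathlib

lemma log_le_half_sub_inv {x : ℝ} (hx : 1 ≤ x) : Real.log x ≤ (x - 1/x) / 2 := by
  have hx0 : (0:ℝ) < x := lt_of_lt_of_le one_pos hx
  have h : Real.log x ≤ Real.sinh (Real.log x) :=
    Real.self_le_sinh_iff.mpr (Real.log_nonneg hx)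
  rwa [Real.sinh_eq, Real.exp_log hx0, ← Real.log_inv, Real.exp_log (by positivity), ← one_div] at h

theorem freund_schapire_lemma (L Lt R Rt : ℝ)
    (hL : 0 ≤ L) (hLLt : L ≤ Lt) (hLt : 0 < Lt)
    (hR : 0 < R) (hRRt : R ≤ Rt)
    (β : ℝ) (hβ : β = 1 / (1 + Real.sqrt (2 * Rt / Lt))) :
    (-L * Real.log β + R) / (1 - β) ≤ L + Real.sqrt (2 * Lt * Rt) + R := by
  set s := Real.sqrt (2 * Rt / Lt) with hs_def
  have hRt : 0 < Rt := lt_of_lt_of_le hR hRRt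
  have hs : 0 < s := Real.sqrt_pos.mpr (by positivity)
  have hs2 : s ^ 2 = 2 * Rt / Lt := Real.sq_sqrt (by positivity)
  have hsqrt : Real.sqrt (2 * Lt * Rt) = Lt * s := by
    rw [show 2 * Lt * Rt = (Lt * s)^2 by rw [mul_pow, hs2]; field_simp]
    exact Real.sqrt_sq (by positivity)
  have h1s : (0:ℝ) < 1 + s := by linarith
  have hβ' : 1 - β = s / (1 + s) := by rw [hβ]; field_simp; ring
  have hlogβ : Real.log β = - Real.log (1 + s) := by
    rw [hβ, one_div, Real.log_inv]
  have hlog : Real.log (1 + s) ≤ ((1+s) - 1/(1+s)) / 2 :=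
    log_le_half_sub_inv (by linarith)
  rw [hsqrt, hβ', hlogβ, div_le_iff₀ (by positivity)]
  have key : Real.log (1 + s) * (2 * (1 + s)) ≤ s * (2 + s) := by
    have := mul_le_mul_of_nonneg_right hlog (le_of_lt (by positivity : (0:ℝ) < 2 * (1+s)))
    calc Real.log (1+s) * (2*(1+s)) ≤ (((1+s) - 1/(1+s))/2) * (2*(1+s)) := this
      _ = s * (2 + s) := by field_simp; ring
  have hRts : Rt = Lt * s^2 / 2 := by rw [hs2]; field_simp
  have hLlog : L * (Real.log (1+s) * (2*(1+s))) ≤ L * (s * (2+s)) :=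
    mul_le_mul_of_nonneg_left key hL
  rw [div_eq_mul_inv]
  rw [← sub_nonneg]
  have expand : (L + Lt * s + R) * (s * (1+s)⁻¹) - (-L * -Real.log (1+s) + R)
      = ((L + Lt*s + R) * s - (L * Real.log (1+s) + R) * (1+s)) * (1+s)⁻¹ := by
    field_simp
  rw [expand]
  apply mul_nonneg _ (by positivity)
  nlinarith [mul_le_mul_of_nonneg_right hLLt (mul_pos hs hs).le, key, hLlog]
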